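/- Let 1 < p < ∞, let Z be an infinite-dimensional complex Banach space, and let J : ℓ_p → Z be a linear isometric embedding. Assume that (a) every infinite-dimensional closed subspace of Z contains a sequence equivalent to the unit vector basis of ℓ_p; (b) Z satisfies the Principle of Small Perturbations with respect to J; and (c) for every 0 < δ < 1/2 the space ℓ_p admits an inevitable biorthogonal system with constant δ. Then Z is arbitrarily distortable. -/

import Mathlib

open scoped ENNReal

noncomputable section

/-- The complex sequence space `ℓ_p` indexed by `ℕ`. -/
abbrev LpSeq (p : ℝ≥0∞) := lp (fun _ : ℕ => ℂ) p

/-- A sequence `w` in `X` is `C`-equivalent to the unit vector basis of `ℓ_p`: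
for every finitely supported scalar sequence `lam`,
`C⁻¹ (∑ |lam n|^p)^{1/p} ≤ ‖∑ lam n • w n‖ ≤ C (∑ |lam n|^p)^{1/p}`. -/
def IsEquivUnitVecBasisLp (p : ℝ≥0∞) {X : Type*} [NormedAddCommGroup X]
    [NormedSpace ℂ X] (C : ℝ) (w : ℕ → X) : Prop :=
  1 ≤ C ∧ ∀ (F : Finset ℕ) (lam : ℕ → ℂ),
    C⁻¹ * (∑ n ∈ F, ‖lam n‖ ^ p.toReal) ^ (1 / p.toReal) ≤ ‖∑ n ∈ F, lam n • w n‖ ∧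
    ‖∑ n ∈ F, lam n • w n‖ ≤ C * (∑ n ∈ F, ‖lam n‖ ^ p.toReal) ^ (1 / p.toReal)

/-- `Z` satisfies the Principle of Small Perturbations with respect to a linear
isometric embedding `J : ℓ_p → Z`. -/
def SatisfiesPSP (p : ℝ≥0∞) [Fact (1 ≤ p)] {Z : Type*} [NormedAddCommGroup Z]
    [NormedSpace ℂ Z] (J : LpSeq p →ₗᵢ[ℂ] Z) : Prop :=
  ∀ w : ℕ → Z, (∃ C : ℝ, IsEquivUnitVecBasisLp p C w) →
    ∃ (k : ℕ → ℕ) (y : ℕ → LpSeq p),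
      StrictMono k ∧ (∀ j, y j ≠ 0) ∧
      (∀ j m n, (y j : ∀ _ : ℕ, ℂ) m ≠ 0 → (y (j + 1) : ∀ _ : ℕ, ℂ) n ≠ 0 → m < n) ∧
      (∀ j, ‖y j‖ = 1) ∧ (∀ j, ‖w (k j) - J (y j)‖ ≤ (1 / 2 : ℝ) ^ j)

/-- A subset `A` of (the unit sphere of) `X` is inevitable: every
infinite-dimensional closed subspace of `X` comes arbitrarily close to `A`. -/
def Inevitable {X : Type*} [NormedAddCommGroup X] [NormedSpace ℂ X] (A : Set X) : Prop :=
  ∀ H : Submodule ℂ X, IsClosed (H : Set X) → ¬ FiniteDimensional ℂ H →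
    ∀ ε : ℝ, 0 < ε → ∃ h ∈ H, ∃ a ∈ A, ‖h - a‖ < ε

/-- `X` admits an inevitable biorthogonal system with constant `δ`. -/
def InevitableBiorthSystem (X : Type*) [NormedAddCommGroup X] [NormedSpace ℂ X]
    (δ : ℝ) : Prop :=
  ∃ (A : ℕ → Set X) (B : ℕ → Set (X →L[ℂ] ℂ)),
    (∀ j, A j ⊆ Metric.sphere (0 : X) 1) ∧
    (∀ j, B j ⊆ Metric.closedBall (0 : X →L[ℂ] ℂ) 1) ∧
    (∀ j, Inevitable (A j)) ∧
    (∀ j, ∀ x ∈ A j, ∃ f ∈ B j, 1 - δ ≤ (f x).re) ∧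
    (∀ j k, j ≠ k → ∀ x ∈ A j, ∀ f ∈ B k, ‖f x‖ ≤ δ)

/-- `N : X → ℝ` is a norm on the complex normed space `X`. -/
def IsNormOn {X : Type*} [NormedAddCommGroup X] [NormedSpace ℂ X] (N : X → ℝ) : Prop :=
  (∀ x, 0 ≤ N x) ∧ (∀ x, N x = 0 → x = 0) ∧
  (∀ (c : ℂ) (x : X), N (c • x) = ‖c‖ * N x) ∧
  (∀ x y, N (x + y) ≤ N x + N y)

/-- The norm of `X` is `lam`-distortable. -/
def Distortable (X : Type*) [NormedAddCommGroup X] [NormedSpace ℂ X] (lam : ℝ) : Prop :=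
  ∃ N : X → ℝ, IsNormOn N ∧
    (∃ c > (0 : ℝ), ∃ C > (0 : ℝ), ∀ x, c * ‖x‖ ≤ N x ∧ N x ≤ C * ‖x‖) ∧
    ∀ Y : Submodule ℂ X, IsClosed (Y : Set X) → ¬ FiniteDimensional ℂ Y →
      lam ≤ sSup {r : ℝ | ∃ x ∈ Y, ∃ y ∈ Y, ‖x‖ = 1 ∧ ‖y‖ = 1 ∧ r = N x / N y}

/-- `X` is arbitrarily distortable. -/
def ArbitrarilyDistortable (X : Type*) [NormedAddCommGroup X] [NormedSpace ℂ X] : Prop :=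
  ∀ lam : ℝ, 1 < lam → Distortable X lam

/-- Hahn–Banach extension of a functional along a linear isometric embedding. -/
lemma exists_extension_functional {E Z : Type*} [NormedAddCommGroup E] [NormedSpace ℂ E]
    [NormedAddCommGroup Z] [NormedSpace ℂ Z] (J : E →ₗᵢ[ℂ] Z) (f : E →L[ℂ] ℂ) :
    ∃ g : Z →L[ℂ] ℂ, ‖g‖ ≤ ‖f‖ ∧ ∀ u, g (J u) = f u := by
  set R : Submodule ℂ Z := LinearMap.range J.toLinearMap with hR
  let e : E ≃ₗ[ℂ] R := LinearEquiv.ofInjective J.toLinearMap J.injective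
  have he : ∀ u : E, ((e u : R) : Z) = J u := fun u =>
    LinearEquiv.ofInjective_apply _ u
  let L : R →ₗ[ℂ] ℂ := f.toLinearMap ∘ₗ (e.symm : R →ₗ[ℂ] E)
  have hbound : ∀ x : R, ‖L x‖ ≤ ‖f‖ * ‖x‖ := by
    intro x
    obtain ⟨u, rfl⟩ : ∃ u, e u = x := ⟨e.symm x, e.apply_symm_apply x⟩
    have h1 : L (e u) = f u := by
      simp [L, e.symm_apply_apply]
    have h2 : ‖(e u : R)‖ = ‖u‖ := by
      rw [show ‖(e u : R)‖ = ‖((e u : R) : Z)‖ from rfl, he u, J.norm_map]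
    rw [h1, h2]
    exact f.le_opNorm u
  let L' : R →L[ℂ] ℂ := L.mkContinuous ‖f‖ hbound
  obtain ⟨g, hg, hgnorm⟩ := exists_extension_norm_eq R L'
  refine ⟨g, ?_, ?_⟩
  · rw [hgnorm]
    exact L.mkContinuous_norm_le (norm_nonneg f) hbound
  · intro u
    have h3 := hg (e u)
    rw [he u] at h3
    have h4 : L' (e u) = f u := by
      simp [L', L, e.symm_apply_apply]
    rw [h3, h4]

/-- For disjointly supported vectors in `ℓ_p`, each summand's norm is at most the
norm of the sum. -/
lemma lp_coeff_norm_le {p : ℝ≥0∞} [Fact (1 ≤ p)] (hp : 0 < p.toReal) (v : ℕ → LpSeq p)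
    (hdisj : ∀ i j, i ≠ j → ∀ t, (v i : ∀ _ : ℕ, ℂ) t ≠ 0 → (v j : ∀ _ : ℕ, ℂ) t = 0)
    (F : Finset ℕ) (c : ℕ → ℂ) {j : ℕ} (hj : j ∈ F) :
    ‖c j • v j‖ ≤ ‖∑ i ∈ F, c i • v i‖ := by
  set h' : LpSeq p := ∑ i ∈ F, c i • v i with hh'
  have hpt : ∀ t, ‖(c j • v j : LpSeq p) t‖ ^ p.toReal ≤ ‖h' t‖ ^ p.toReal := by
    intro t
    by_cases hvt : (v j : ∀ _ : ℕ, ℂ) t = 0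
    · have : (c j • v j : LpSeq p) t = 0 := by
        rw [lp.coeFn_smul, Pi.smul_apply, hvt, smul_zero]
      rw [this]
      simp only [norm_zero]
      rw [Real.zero_rpow hp.ne']
      positivity
    · have hsum : h' t = c j • (v j : ∀ _ : ℕ, ℂ) t := by
        rw [hh', lp.coeFn_sum, Finset.sum_apply]
        rw [Finset.sum_eq_single j]
        · rw [lp.coeFn_smul, Pi.smul_apply]
        · intro i hiF hij
          rw [lp.coeFn_smul, Pi.smul_apply, hdisj j i (fun h => hij h.symm) t hvt, smul_zero]
        · intro h; exact absurd hj h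
      have : (c j • v j : LpSeq p) t = h' t := by
        rw [hsum, lp.coeFn_smul, Pi.smul_apply]
      rw [this]
  have hsummable1 : Summable fun t => ‖(c j • v j : LpSeq p) t‖ ^ p.toReal :=
    (lp.memℓp (c j • v j)).summable hp
  have hsummable2 : Summable fun t => ‖h' t‖ ^ p.toReal :=
    (lp.memℓp h').summable hp
  have hts : ‖c j • v j‖ ^ p.toReal ≤ ‖h'‖ ^ p.toReal := by
    rw [lp.norm_rpow_eq_tsum hp, lp.norm_rpow_eq_tsum hp]
    exact Summable.tsum_le_tsum hpt hsummable1 hsummable2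
  exact (Real.rpow_le_rpow_iff (norm_nonneg _) (norm_nonneg _) hp).1 hts

/-- Disjointly supported nonzero vectors are linearly independent. -/
lemma lp_linearIndependent_of_disjoint {p : ℝ≥0∞} [Fact (1 ≤ p)] (v : ℕ → LpSeq p)
    (hv0 : ∀ j, v j ≠ 0)
    (hdisj : ∀ i j, i ≠ j → ∀ t, (v i : ∀ _ : ℕ, ℂ) t ≠ 0 → (v j : ∀ _ : ℕ, ℂ) t = 0) :
    LinearIndependent ℂ v := by
  rw [linearIndependent_iff']
  intro s g hsum i hi
  obtain ⟨t, ht⟩ : ∃ t, (v i : ∀ _ : ℕ, ℂ) t ≠ 0 := by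
    by_contra h
    push_neg at h
    exact hv0 i (lp.ext (funext fun t => by rw [h t, lp.coeFn_zero, Pi.zero_apply]))
  have h1 : ((∑ j ∈ s, g j • v j : LpSeq p) : ∀ _ : ℕ, ℂ) t = g i • (v i : ∀ _ : ℕ, ℂ) t := by
    rw [lp.coeFn_sum, Finset.sum_apply]
    rw [Finset.sum_eq_single i]
    · rw [lp.coeFn_smul, Pi.smul_apply]
    · intro b hbF hbi
      rw [lp.coeFn_smul, Pi.smul_apply, hdisj i b (fun h => hbi h.symm) t ht, smul_zero]
    · intro h; exact absurd hi h
  rw [hsum] at h1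
  rw [lp.coeFn_zero, Pi.zero_apply] at h1
  have := (smul_eq_zero.1 h1.symm).resolve_right ht
  exact this


set_option maxHeartbeats 2000000

/-- If `Z` is an infinite-dimensional complex Banach space
containing `ℓ_p` isometrically via `J`, every infinite-dimensional closed
subspace of `Z` contains a sequence equivalent to the unit vector basis of
`ℓ_p`, `Z` satisfies the P.S.P. with respect to `J`, and `ℓ_p` admits an
inevitable biorthogonal system with constant `δ` for every `0 < δ < 1/2`,
then `Z` is arbitrarily distortable. -/
theorem arbitrarilyDistortable_of_psp
    (p : ℝ≥0∞) [Fact (1 ≤ p)] (hp : 1 < p) (hp' : p ≠ ∞)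
    (Z : Type*) [NormedAddCommGroup Z] [NormedSpace ℂ Z] [CompleteSpace Z]
    (hZ : ¬ FiniteDimensional ℂ Z)
    (J : LpSeq p →ₗᵢ[ℂ] Z)
    (ha : ∀ W : Submodule ℂ Z, IsClosed (W : Set Z) → ¬ FiniteDimensional ℂ W →
      ∃ w : ℕ → Z, (∀ n, w n ∈ W) ∧ ∃ C : ℝ, IsEquivUnitVecBasisLp p C w)
    (hb : SatisfiesPSP p J)
    (hc : ∀ δ : ℝ, 0 < δ → δ < 1 / 2 → InevitableBiorthSystem (LpSeq p) δ) :
    ArbitrarilyDistortable Z := by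
  have hptr : 0 < p.toReal :=
    ENNReal.toReal_pos (ne_of_gt (lt_trans zero_lt_one hp)) hp'
  intro lam hlam
  have hlam0 : (0 : ℝ) < lam := lt_trans one_pos hlam
  set δ : ℝ := min (1/8) (1/(16*lam)) with hδdef
  have hδpos : 0 < δ := lt_min (by norm_num) (by positivity)
  have hδ18 : δ ≤ 1/8 := min_le_left _ _
  have hδlam : δ * lam ≤ 1/16 := by
    have h1 : δ ≤ 1/(16*lam) := min_le_right _ _
    have h2 : δ * lam ≤ (1/(16*lam)) * lam := by
      exact mul_le_mul_of_nonneg_right h1 hlam0.le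
    have h3 : (1/(16*lam)) * lam = 1/16 := by
      field_simp
    linarith
  set M : ℝ := 6 * lam with hMdef
  have hM0 : 0 < M := by positivity
  obtain ⟨A, B, hAs, hBb, hAinev, hAB, hbi⟩ :=
    hc δ hδpos (lt_of_le_of_lt hδ18 (by norm_num))
  -- Hahn–Banach extensions of all functionals
  choose G hGnorm hGext using fun f : LpSeq p →L[ℂ] ℂ => exists_extension_functional J f
  -- the auxiliary seminorm φ
  set Φ : Z → Set ℝ := fun z => insert (0:ℝ) ((fun f => ‖G f z‖) '' B 0) with hΦdef
  set φ : Z → ℝ := fun z => sSup (Φ z) with hφdef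
  have hΦne : ∀ z, (Φ z).Nonempty := fun z => ⟨0, Set.mem_insert _ _⟩
  have hΦbdd : ∀ z, ∀ r ∈ Φ z, r ≤ ‖z‖ := by
    intro z r hr
    rcases Set.mem_insert_iff.1 hr with rfl | ⟨f, hf, rfl⟩
    · exact norm_nonneg z
    · have hf1 : ‖f‖ ≤ 1 := by
        have := hBb 0 hf
        rwa [Metric.mem_closedBall, dist_zero_right] at this
      calc ‖G f z‖ ≤ ‖G f‖ * ‖z‖ := (G f).le_opNorm z
        _ ≤ 1 * ‖z‖ :=
          mul_le_mul_of_nonneg_right ((hGnorm f).trans hf1) (norm_nonneg z)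
        _ = ‖z‖ := one_mul _
  have hΦbddAbove : ∀ z, BddAbove (Φ z) := fun z => ⟨‖z‖, fun r hr => hΦbdd z r hr⟩
  have hle_φ : ∀ z, ∀ f ∈ B 0, ‖G f z‖ ≤ φ z := by
    intro z f hf
    exact le_csSup (hΦbddAbove z) (Set.mem_insert_of_mem _ ⟨f, hf, rfl⟩)
  have hφ_le : ∀ z b, 0 ≤ b → (∀ f ∈ B 0, ‖G f z‖ ≤ b) → φ z ≤ b := by
    intro z b hb h
    refine csSup_le (hΦne z) ?_
    rintro r (rfl | ⟨f, hf, rfl⟩)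
    · exact hb
    · exact h f hf
  have hφ0 : ∀ z, 0 ≤ φ z := fun z => le_csSup (hΦbddAbove z) (Set.mem_insert _ _)
  have hφnorm : ∀ z, φ z ≤ ‖z‖ := fun z => csSup_le (hΦne z) (hΦbdd z)
  have hφ_add : ∀ z1 z2, φ (z1 + z2) ≤ φ z1 + φ z2 := by
    intro z1 z2
    refine hφ_le _ _ (add_nonneg (hφ0 z1) (hφ0 z2)) ?_
    intro f hf
    calc ‖G f (z1 + z2)‖ = ‖G f z1 + G f z2‖ := by rw [map_add]
      _ ≤ ‖G f z1‖ + ‖G f z2‖ := norm_add_le _ _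
      _ ≤ φ z1 + φ z2 := add_le_add (hle_φ z1 f hf) (hle_φ z2 f hf)
  have hφ_smul : ∀ (c : ℂ) (z : Z), φ (c • z) = ‖c‖ * φ z := by
    intro c z
    by_cases hc : c = 0
    · subst hc
      rw [zero_smul]
      have h0 : φ (0 : Z) = 0 := le_antisymm (by simpa using hφnorm 0) (hφ0 0)
      simp [h0]
    · have habs : (0:ℝ) < ‖c‖ := by
        simpa using norm_pos_iff.mpr hc
      refine le_antisymm ?_ ?_
      · refine hφ_le _ _ (mul_nonneg habs.le (hφ0 z)) ?_
        intro f hf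
        have : ‖G f (c • z)‖ = ‖c‖ * ‖G f z‖ := by
          rw [map_smul, smul_eq_mul, norm_mul]
        rw [this]
        exact mul_le_mul_of_nonneg_left (hle_φ z f hf) habs.le
      · have key : φ z ≤ (‖c‖)⁻¹ * φ (c • z) := by
          refine hφ_le _ _ (mul_nonneg (inv_nonneg.2 habs.le) (hφ0 _)) ?_
          intro f hf
          have h1 : ‖G f z‖ = (‖c‖)⁻¹ * ‖G f (c • z)‖ := by
            rw [map_smul, smul_eq_mul, norm_mul]
            field_simp
          rw [h1]
          exact mul_le_mul_of_nonneg_left (hle_φ _ f hf) (inv_nonneg.2 habs.le)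
        calc ‖c‖ * φ z ≤ ‖c‖ * ((‖c‖)⁻¹ * φ (c • z)) :=
              mul_le_mul_of_nonneg_left key habs.le
          _ = φ (c • z) := by field_simp
  -- the distorted norm
  set N : Z → ℝ := fun z => ‖z‖ + M * φ z with hNdef
  have hN_smul : ∀ (c : ℂ) (z : Z), N (c • z) = ‖c‖ * N z := by
    intro c z
    simp only [hNdef]
    rw [norm_smul, hφ_smul]
    ring
  have hN_ge : ∀ z, ‖z‖ ≤ N z := by
    intro z
    have := mul_nonneg hM0.le (hφ0 z)
    simp only [hNdef]
    linarith
  have hN_le : ∀ z, N z ≤ (1 + M) * ‖z‖ := by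
    intro z
    have := mul_le_mul_of_nonneg_left (hφnorm z) hM0.le
    simp only [hNdef]
    nlinarith [norm_nonneg z]
  refine ⟨N, ⟨?_, ?_, hN_smul, ?_⟩, ⟨1, one_pos, 1 + M, by linarith, fun x => ⟨by simpa using hN_ge x, hN_le x⟩⟩, ?_⟩
  · intro x
    exact le_trans (norm_nonneg x) (hN_ge x)
  · intro x hx
    have := hN_ge x
    rw [hx] at this
    exact norm_le_zero_iff.1 this
  · intro x y
    have h1 := hφ_add x y
    have := norm_add_le x y
    simp only [hNdef]
    nlinarith
  -- the main distortion estimate on subspaces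
  intro Y hYc hYfd
  obtain ⟨w, hwY, C, hCw⟩ := ha Y hYc hYfd
  obtain ⟨k, y, hkmono, hy0, hblk, hy1, hyw⟩ := hb w ⟨C, hCw⟩
  -- chain property of blocks
  have hex : ∀ n, ∃ u, (y n : ∀ _ : ℕ, ℂ) u ≠ 0 := by
    intro n
    by_contra h
    push_neg at h
    exact hy0 n (lp.ext (funext fun t => by rw [h t, lp.coeFn_zero, Pi.zero_apply]))
  have hchain : ∀ i j, i < j → ∀ s t,
      (y i : ∀ _ : ℕ, ℂ) s ≠ 0 → (y j : ∀ _ : ℕ, ℂ) t ≠ 0 → s < t := by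
    intro i j hij
    induction j, hij using Nat.le_induction with
    | base => exact hblk i
    | succ n hn ih =>
      intro s t hs ht
      obtain ⟨u, hu⟩ := hex n
      exact lt_trans (ih s u hs hu) (hblk n u t hu ht)
  have hdisjy : ∀ i j, i ≠ j → ∀ t,
      (y i : ∀ _ : ℕ, ℂ) t ≠ 0 → (y j : ∀ _ : ℕ, ℂ) t = 0 := by
    intro i j hij t hi
    by_contra hj
    rcases hij.lt_or_gt with h | h
    · exact lt_irrefl t (hchain i j h t t hi hj)
    · exact lt_irrefl t (hchain j i h t t hj hi)
  -- choose the tail index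
  obtain ⟨m, hm⟩ : ∃ m : ℕ, ((1:ℝ)/2) ^ m < δ / 8 := by
    obtain ⟨m, hm⟩ := exists_pow_lt_of_lt_one (by positivity : (0:ℝ) < δ / 8)
      (by norm_num : (1:ℝ)/2 < 1)
    exact ⟨m, hm⟩
  -- near points in Y
  have hnear : ∀ jA : ℕ, ∃ z, z ∈ Y ∧ ∃ a ∈ A jA, ‖z - J a‖ ≤ δ := by
    intro jA
    set v : ℕ → LpSeq p := fun j => y (j + m) with hvdef
    set u : ℕ → Z := fun j => w (k (j + m)) with hudef
    have hvdisj : ∀ i j, i ≠ j → ∀ t,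
        (v i : ∀ _ : ℕ, ℂ) t ≠ 0 → (v j : ∀ _ : ℕ, ℂ) t = 0 := by
      intro i j hij t
      exact hdisjy (i + m) (j + m) (by omega) t
    set H : Submodule ℂ (LpSeq p) :=
      (Submodule.span ℂ (Set.range v)).topologicalClosure with hHdef
    have hHclosed : IsClosed (H : Set (LpSeq p)) :=
      Submodule.isClosed_topologicalClosure _
    have hmemH : ∀ j, v j ∈ H := fun j =>
      Submodule.le_topologicalClosure _ (Submodule.subset_span ⟨j, rfl⟩)
    have hHfd : ¬ FiniteDimensional ℂ H := by
      intro hfin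
      have hvind : LinearIndependent ℂ v :=
        lp_linearIndependent_of_disjoint v (fun j => hy0 (j + m)) hvdisj
      have hlift : LinearIndependent ℂ (fun j => (⟨v j, hmemH j⟩ : H)) :=
        LinearIndependent.of_comp H.subtype hvind
      exact Module.Finite.not_linearIndependent_of_infinite _ hlift
    obtain ⟨h, hhH, a, haA, hha⟩ := hAinev jA H hHclosed hHfd (δ/8) (by positivity)
    -- approximate h by an element of the span
    have hclos : h ∈ closure ((Submodule.span ℂ (Set.range v) : Submodule ℂ (LpSeq p)) :
        Set (LpSeq p)) := by
      rw [← Submodule.topologicalClosure_coe]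
      exact hhH
    obtain ⟨h', hh'mem, hh'close⟩ := Metric.mem_closure_iff.1 hclos (δ/8) (by positivity)
    obtain ⟨cf, hcf⟩ := Finsupp.mem_span_range_iff_exists_finsupp.1 hh'mem
    set F : Finset ℕ := cf.support with hFdef
    set c : ℕ → ℂ := fun i => cf i with hcdef
    have hh'eq : h' = ∑ i ∈ F, c i • v i := by
      rw [← hcf]
      rfl
    have ha1 : ‖a‖ = 1 := by
      have := hAs jA haA
      rwa [mem_sphere_iff_norm, sub_zero] at this
    have hh'a : ‖h' - a‖ ≤ δ/4 := by
      have h1 : ‖h' - h‖ < δ/8 := by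
        rw [← dist_eq_norm]
        rw [dist_comm]
        exact hh'close
      calc ‖h' - a‖ = ‖(h' - h) + (h - a)‖ := by congr 1; abel
        _ ≤ ‖h' - h‖ + ‖h - a‖ := norm_add_le _ _
        _ ≤ δ/8 + δ/8 := by linarith [hha]
        _ = δ/4 := by ring
    have hh'n : ‖h'‖ ≤ 2 := by
      have : ‖h'‖ ≤ ‖h' - a‖ + ‖a‖ := by
        calc ‖h'‖ = ‖(h' - a) + a‖ := by congr 1; abel
          _ ≤ ‖h' - a‖ + ‖a‖ := norm_add_le _ _
      rw [ha1] at this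
      linarith [hδ18]
    have hcoef : ∀ i ∈ F, ‖c i‖ ≤ 2 := by
      intro i hi
      have h1 : ‖c i • v i‖ ≤ ‖h'‖ := by
        rw [hh'eq]
        exact lp_coeff_norm_le hptr v hvdisj F c hi
      rw [norm_smul, hy1 (i + m), mul_one] at h1
      linarith
    -- the element of Y
    set z : Z := ∑ i ∈ F, c i • u i with hzdef
    have hzY : z ∈ Y := Submodule.sum_mem _ fun i _ => Submodule.smul_mem _ _ (hwY _)
    have hJh' : J h' = ∑ i ∈ F, c i • J (v i) := by
      rw [hh'eq, map_sum]
      simp only [map_smul]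
    have hzJ : ‖z - J h'‖ ≤ δ/2 := by
      rw [hJh', hzdef, ← Finset.sum_sub_distrib]
      have h1 : ∀ i ∈ F, ‖c i • u i - c i • J (v i)‖ ≤ 2 * ((1/2:ℝ)^m * (1/2)^i) := by
        intro i hi
        rw [← smul_sub, norm_smul]
        have h2 : ‖u i - J (v i)‖ ≤ (1/2:ℝ)^(i+m) := hyw (i + m)
        have h3 : ((1:ℝ)/2)^(i+m) = (1/2:ℝ)^m * (1/2)^i := by
          rw [pow_add]; ring
        rw [← h3]
        have := hcoef i hi
        have h4 : (0:ℝ) ≤ (1/2:ℝ)^(i+m) := by positivity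
        nlinarith [norm_nonneg (u i - J (v i)), norm_nonneg (c i)]
      calc ‖∑ i ∈ F, (c i • u i - c i • J (v i))‖
          ≤ ∑ i ∈ F, ‖c i • u i - c i • J (v i)‖ := norm_sum_le _ _
        _ ≤ ∑ i ∈ F, 2 * ((1/2:ℝ)^m * (1/2)^i) := Finset.sum_le_sum h1
        _ = 2 * (1/2:ℝ)^m * ∑ i ∈ F, (1/2:ℝ)^i := by
            rw [Finset.mul_sum]; apply Finset.sum_congr rfl; intros; ring
        _ ≤ 2 * (1/2:ℝ)^m * 2 := by
            have hsub : F ⊆ Finset.range (F.sup id + 1) := by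
              intro i hi
              rw [Finset.mem_range]
              exact Nat.lt_succ_of_le (Finset.le_sup (f := id) hi)
            have h5 : ∑ i ∈ F, (1/2:ℝ)^i ≤ ∑ i ∈ Finset.range (F.sup id + 1), (1/2:ℝ)^i :=
              Finset.sum_le_sum_of_subset_of_nonneg hsub (fun i _ _ => by positivity)
            have h6 := sum_geometric_two_le (F.sup id + 1)
            have h7 : (0:ℝ) ≤ 2 * (1/2:ℝ)^m := by positivity
            nlinarith
        _ ≤ δ/2 := by nlinarith [hm]
    refine ⟨z, hzY, a, haA, ?_⟩
    calc ‖z - J a‖ = ‖(z - J h') + (J h' - J a)‖ := by congr 1; abel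
      _ ≤ ‖z - J h'‖ + ‖J h' - J a‖ := norm_add_le _ _
      _ = ‖z - J h'‖ + ‖h' - a‖ := by rw [← map_sub, J.norm_map]
      _ ≤ δ/2 + δ/4 := add_le_add hzJ hh'a
      _ ≤ δ := by linarith
  -- the two vectors
  obtain ⟨z1, hz1Y, a1, ha1A, hz1a⟩ := hnear 0
  obtain ⟨z2, hz2Y, a2, ha2A, hz2a⟩ := hnear 1
  have ha1n : ‖a1‖ = 1 := by
    have := hAs 0 ha1A; rwa [mem_sphere_iff_norm, sub_zero] at this
  have ha2n : ‖a2‖ = 1 := by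
    have := hAs 1 ha2A; rwa [mem_sphere_iff_norm, sub_zero] at this
  have hJa1 : ‖J a1‖ = 1 := by rw [J.norm_map]; exact ha1n
  have hJa2 : ‖J a2‖ = 1 := by rw [J.norm_map]; exact ha2n
  have hz1lb : 1 - δ ≤ ‖z1‖ := by
    have := norm_sub_norm_le (J a1) z1
    rw [hJa1] at this
    rw [norm_sub_rev] at hz1a
    linarith
  have hz1ub : ‖z1‖ ≤ 1 + δ := by
    have := norm_le_norm_add_norm_sub' z1 (J a1)
    rw [hJa1] at this
    linarith [hz1a]
  have hz2lb : 1 - δ ≤ ‖z2‖ := by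
    have := norm_sub_norm_le (J a2) z2
    rw [hJa2] at this
    rw [norm_sub_rev] at hz2a
    linarith
  have hz2ub : ‖z2‖ ≤ 1 + δ := by
    have := norm_le_norm_add_norm_sub' z2 (J a2)
    rw [hJa2] at this
    linarith [hz2a]
  have hz1pos : (0:ℝ) < ‖z1‖ := by linarith [hδ18]
  have hz2pos : (0:ℝ) < ‖z2‖ := by linarith [hδ18]
  -- φ estimates
  have hφz1 : 1 - 2*δ ≤ φ z1 := by
    obtain ⟨f, hfB, hfre⟩ := hAB 0 a1 ha1A
    have h1 : ‖G f (J a1)‖ = ‖f a1‖ := by rw [hGext]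
    have h2 : 1 - δ ≤ ‖f a1‖ := by
      calc 1 - δ ≤ (f a1).re := hfre
        _ ≤ ‖f a1‖ := Complex.re_le_norm _
    have hf1 : ‖f‖ ≤ 1 := by
      have := hBb 0 hfB
      rwa [Metric.mem_closedBall, dist_zero_right] at this
    have h3 : ‖G f (z1 - J a1)‖ ≤ δ := by
      calc ‖G f (z1 - J a1)‖ ≤ ‖G f‖ * ‖z1 - J a1‖ := (G f).le_opNorm _
        _ ≤ 1 * δ := mul_le_mul ((hGnorm f).trans hf1) hz1a (norm_nonneg _)
            (by norm_num)
        _ = δ := one_mul _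
    have h4 : ‖G f z1‖ ≥ ‖G f (J a1)‖ - ‖G f (z1 - J a1)‖ := by
      have harg : J a1 + (z1 - J a1) = z1 := by abel
      have hdecomp : G f z1 = G f (J a1) + G f (z1 - J a1) := by rw [← map_add, harg]
      rw [hdecomp]
      have h6 := norm_sub_le (G f (J a1) + G f (z1 - J a1)) (G f (z1 - J a1))
      simp only [add_sub_cancel_right] at h6
      linarith
    have h5 := hle_φ z1 f hfB
    rw [h1] at h4
    linarith
  have hφz2 : φ z2 ≤ 2*δ := by
    refine hφ_le _ _ (by linarith) ?_
    intro f hfB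
    have h1 : ‖G f (J a2)‖ = ‖f a2‖ := by rw [hGext]
    have h2 : ‖f a2‖ ≤ δ := by
      exact hbi 1 0 one_ne_zero a2 ha2A f hfB
    have hf1 : ‖f‖ ≤ 1 := by
      have := hBb 0 hfB
      rwa [Metric.mem_closedBall, dist_zero_right] at this
    have h3 : ‖G f (z2 - J a2)‖ ≤ δ := by
      calc ‖G f (z2 - J a2)‖ ≤ ‖G f‖ * ‖z2 - J a2‖ := (G f).le_opNorm _
        _ ≤ 1 * δ := mul_le_mul ((hGnorm f).trans hf1) hz2a (norm_nonneg _)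
            (by norm_num)
        _ = δ := one_mul _
    have harg : J a2 + (z2 - J a2) = z2 := by abel
    calc ‖G f z2‖ = ‖G f (J a2) + G f (z2 - J a2)‖ := by
          rw [← map_add, harg]
      _ ≤ ‖G f (J a2)‖ + ‖G f (z2 - J a2)‖ := norm_add_le _ _
      _ ≤ δ + δ := by rw [h1]; exact add_le_add h2 h3
      _ = 2*δ := by ring
  -- N estimates
  have hNz1 : (1 - δ) + M * (1 - 2*δ) ≤ N z1 := by
    simp only [hNdef]
    have := mul_le_mul_of_nonneg_left hφz1 hM0.le
    linarith
  have hNz2 : N z2 ≤ (1 + δ) + M * (2*δ) := by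
    simp only [hNdef]
    have := mul_le_mul_of_nonneg_left hφz2 hM0.le
    linarith
  have hNz1pos : 0 < N z1 := lt_of_lt_of_le hz1pos (hN_ge z1)
  have hNz2pos : 0 < N z2 := lt_of_lt_of_le hz2pos (hN_ge z2)
  -- key arithmetic inequality
  have hkey : lam * N z2 * ‖z1‖ ≤ N z1 * ‖z2‖ := by
    have step2 : lam * ((1 + δ) + M * (2*δ)) * (1 + δ) ≤
        ((1 - δ) + M * (1 - 2*δ)) * (1 - δ) := by
      rw [hMdef]
      nlinarith [hδpos.le, hδ18, hδlam, hlam, hlam0.le,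
        mul_nonneg hδpos.le hlam0.le,
        mul_le_mul_of_nonneg_left hδlam hlam0.le,
        mul_le_mul_of_nonneg_left hδlam hδpos.le,
        mul_le_mul hδlam hδlam (mul_nonneg hδpos.le hlam0.le) (by norm_num : (0:ℝ) ≤ 1/16),
        mul_nonneg (mul_nonneg hδpos.le hδpos.le) hlam0.le,
        sq_nonneg δ, sq_nonneg (1 - δ)]
    have step1 : lam * N z2 * ‖z1‖ ≤ lam * ((1 + δ) + M * (2*δ)) * (1 + δ) := by
      have hB2 : (0:ℝ) ≤ (1 + δ) + M * (2*δ) := le_trans hNz2pos.le hNz2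
      have h1 : N z2 * ‖z1‖ ≤ ((1 + δ) + M * (2*δ)) * (1 + δ) :=
        mul_le_mul hNz2 hz1ub (norm_nonneg z1) hB2
      calc lam * N z2 * ‖z1‖ = lam * (N z2 * ‖z1‖) := by ring
        _ ≤ lam * (((1 + δ) + M * (2*δ)) * (1 + δ)) :=
            mul_le_mul_of_nonneg_left h1 hlam0.le
        _ = lam * ((1 + δ) + M * (2*δ)) * (1 + δ) := by ring
    have step3 : ((1 - δ) + M * (1 - 2*δ)) * (1 - δ) ≤ N z1 * ‖z2‖ := by
      have hb2 : (0:ℝ) ≤ 1 - δ := by linarith [hδ18]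
      exact mul_le_mul hNz1 hz2lb hb2 hNz1pos.le
    linarith
  -- normalized vectors
  set c1 : ℂ := ((‖z1‖⁻¹ : ℝ) : ℂ) with hc1def
  set c2 : ℂ := ((‖z2‖⁻¹ : ℝ) : ℂ) with hc2def
  set x : Z := c1 • z1 with hxdef
  set y' : Z := c2 • z2 with hy'def
  have hc1abs : ‖c1‖ = ‖z1‖⁻¹ := by
    rw [hc1def, Complex.norm_real, Real.norm_eq_abs, abs_of_nonneg (inv_nonneg.2 hz1pos.le)]
  have hc2abs : ‖c2‖ = ‖z2‖⁻¹ := by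
    rw [hc2def, Complex.norm_real, Real.norm_eq_abs, abs_of_nonneg (inv_nonneg.2 hz2pos.le)]
  have hxY : x ∈ Y := Submodule.smul_mem _ _ hz1Y
  have hy'Y : y' ∈ Y := Submodule.smul_mem _ _ hz2Y
  have hxn : ‖x‖ = 1 := by
    rw [hxdef, norm_smul, hc1abs]
    exact inv_mul_cancel₀ hz1pos.ne'
  have hy'n : ‖y'‖ = 1 := by
    rw [hy'def, norm_smul]
    rw [hc2abs]
    exact inv_mul_cancel₀ hz2pos.ne'
  have hNx : N x = ‖z1‖⁻¹ * N z1 := by rw [hxdef, hN_smul, hc1abs]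
  have hNy' : N y' = ‖z2‖⁻¹ * N z2 := by rw [hy'def, hN_smul, hc2abs]
  -- conclude
  have hmem : N x / N y' ∈ {r : ℝ | ∃ x ∈ Y, ∃ y ∈ Y, ‖x‖ = 1 ∧ ‖y‖ = 1 ∧ r = N x / N y} :=
    ⟨x, hxY, y', hy'Y, hxn, hy'n, rfl⟩
  have hbdd : BddAbove {r : ℝ | ∃ x ∈ Y, ∃ y ∈ Y, ‖x‖ = 1 ∧ ‖y‖ = 1 ∧ r = N x / N y} := by
    refine ⟨1 + M, ?_⟩
    rintro r ⟨x0, _, y0, _, hx0, hy0', rfl⟩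
    have h1 : N x0 ≤ 1 + M := by
      have := hN_le x0; rw [hx0] at this; linarith
    have h2 : (1:ℝ) ≤ N y0 := by
      have := hN_ge y0; rw [hy0'] at this; linarith
    calc N x0 / N y0 ≤ N x0 := div_le_self (le_trans (norm_nonneg x0) (hN_ge x0)) h2
      _ ≤ 1 + M := h1
  have hlamle : lam ≤ N x / N y' := by
    rw [hNx, hNy', inv_mul_eq_div, inv_mul_eq_div]
    rw [le_div_iff₀ (by positivity : (0:ℝ) < N z2 / ‖z2‖)]
    rw [show lam * (N z2 / ‖z2‖) = lam * N z2 / ‖z2‖ from (mul_div_assoc _ _ _).symm]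
    rw [div_le_div_iff₀ hz2pos hz1pos]
    exact hkey
  exact le_csSup_of_le hbdd hmem hlamle
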